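/- Fix a positive integer d. For ℓ ≥ 1, among the bad tuples (j¹, j², j³, j⁴) of sequences of length ℓ+1 in {1,…,d} with j^k_0 = 1 for all k ∈ {1,2,3,4}, let A_ℓ be the number of those with j^1_ℓ = j^2_ℓ = j^3_ℓ = j^4_ℓ, and let B_ℓ be the number of those for which there is a partition of {1,2,3,4} into two disjoint pairs {p,q} and {r,s} with j^p_ℓ = j^q_ℓ, j^r_ℓ = j^s_ℓ and j^p_ℓ ≠ j^r_ℓ. Then every such bad tuple is counted in exactly one of A_ℓ and B_ℓ, and A₁ = d, B₁ = 3(d² − d), and for all ℓ ≥ 1: A_{ℓ+1} = d·A_ℓ + d·B_ℓ and B_{ℓ+1} = 3(d² − d)·A_ℓ + (d² − d)·B_ℓ. -/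

import Mathlib

/-!
STATEMENT 7: Fix a positive integer `d`. For `ℓ ≥ 1`, among the bad tuples of sequences of
length `ℓ+1` in `{1,…,d}` starting at `1`, let `A_ℓ` count those whose four final values are
all equal and `B_ℓ` count those whose final values split into two pairs with distinct values.
Then every such bad tuple is counted in exactly one of `A_ℓ` and `B_ℓ`, `A₁ = d`,
`B₁ = 3(d² − d)`, and for all `ℓ ≥ 1`: `A_{ℓ+1} = d·A_ℓ + d·B_ℓ` and
`B_{ℓ+1} = 3(d² − d)·A_ℓ + (d² − d)·B_ℓ`.
-/

/-- At one step, the four pairs of consecutive values can be split into two disjoint pairs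
that agree both at time `i` and at time `i+1`. -/
def StepOK (u v : Fin 4 → ℕ) : Prop :=
  ∃ p q r s : Fin 4, ({p, q, r, s} : Finset (Fin 4)) = Finset.univ ∧
    u p = u q ∧ v p = v q ∧ u r = u s ∧ v r = v s

/-- A tuple of four sequences of length `ℓ+1` with entries in `{1, …, d}` is bad if the
pairing condition holds at every step `i ∈ {0, …, ℓ−1}`. -/
def BadTuple (d ℓ : ℕ) (j : Fin 4 → Fin (ℓ + 1) → ℕ) : Prop :=
  (∀ k i, j k i ∈ Finset.Icc 1 d) ∧
    ∀ i : Fin ℓ, StepOK (fun k => j k i.castSucc) (fun k => j k i.succ)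

/-- All four final values are equal. -/
def EndAll (ℓ : ℕ) (j : Fin 4 → Fin (ℓ + 1) → ℕ) : Prop :=
  j 0 (Fin.last ℓ) = j 1 (Fin.last ℓ) ∧ j 1 (Fin.last ℓ) = j 2 (Fin.last ℓ) ∧
    j 2 (Fin.last ℓ) = j 3 (Fin.last ℓ)

/-- The final values split into two disjoint pairs, equal within each pair and distinct
across the two pairs. -/
def EndSplit (ℓ : ℕ) (j : Fin 4 → Fin (ℓ + 1) → ℕ) : Prop :=
  ∃ p q r s : Fin 4, ({p, q, r, s} : Finset (Fin 4)) = Finset.univ ∧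
    j p (Fin.last ℓ) = j q (Fin.last ℓ) ∧ j r (Fin.last ℓ) = j s (Fin.last ℓ) ∧
    j p (Fin.last ℓ) ≠ j r (Fin.last ℓ)

/-- `A_ℓ`: the number of bad tuples starting at `1` whose final values are all equal. -/
noncomputable def Acount (d ℓ : ℕ) : ℕ :=
  Nat.card {j : Fin 4 → Fin (ℓ + 1) → ℕ //
    BadTuple d ℓ j ∧ (∀ k, j k 0 = 1) ∧ EndAll ℓ j}

/-- `B_ℓ`: the number of bad tuples starting at `1` whose final values split into two
pairs with distinct values. -/
noncomputable def Bcount (d ℓ : ℕ) : ℕ :=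
  Nat.card {j : Fin 4 → Fin (ℓ + 1) → ℕ //
    BadTuple d ℓ j ∧ (∀ k, j k 0 = 1) ∧ EndSplit ℓ j}

/-- canonical pair-partition `t ∈ {0,1,2}` agrees on `u` -/

def PE (t : ℕ) (u : Fin 4 → ℕ) : Prop :=
  if t = 0 then u 0 = u 1 ∧ u 2 = u 3
  else if t = 1 then u 0 = u 2 ∧ u 1 = u 3
  else u 0 = u 3 ∧ u 1 = u 2

def oth (t : ℕ) : Fin 4 := if t = 0 then 2 else 1

def SP (t : ℕ) (v : Fin 4 → ℕ) : Prop := PE t v ∧ v 0 ≠ v (oth t)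

def pat (t : ℕ) (a b : ℕ) : Fin 4 → ℕ := fun k =>
  if k = 0 then a
  else if t = 0 then (if k = 1 then a else b)
  else if t = 1 then (if k = 2 then a else b)
  else (if k = 3 then a else b)

def ColAll (v : Fin 4 → ℕ) : Prop := v 0 = v 1 ∧ v 1 = v 2 ∧ v 2 = v 3

def ColSplit (v : Fin 4 → ℕ) : Prop :=
  ∃ p q r s : Fin 4, ({p, q, r, s} : Finset (Fin 4)) = Finset.univ ∧
    v p = v q ∧ v r = v s ∧ v p ≠ v r

lemma PE_zero (u : Fin 4 → ℕ) : PE 0 u ↔ (u 0 = u 1 ∧ u 2 = u 3) := by simp [PE]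

lemma PE_one (u : Fin 4 → ℕ) : PE 1 u ↔ (u 0 = u 2 ∧ u 1 = u 3) := by simp [PE]

lemma PE_two (u : Fin 4 → ℕ) : PE 2 u ↔ (u 0 = u 3 ∧ u 1 = u 2) := by simp [PE]

lemma stepOK_iff (u v : Fin 4 → ℕ) :
    StepOK u v ↔ ∃ t, t < 3 ∧ PE t u ∧ PE t v := by
  constructor
  · rintro ⟨p, q, r, s, hset, h1, h2, h3, h4⟩
    have H : ((u 0 = u 1 ∧ u 2 = u 3) ∧ (v 0 = v 1 ∧ v 2 = v 3)) ∨
        ((u 0 = u 2 ∧ u 1 = u 3) ∧ (v 0 = v 2 ∧ v 1 = v 3)) ∨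
        ((u 0 = u 3 ∧ u 1 = u 2) ∧ (v 0 = v 3 ∧ v 1 = v 2)) := by
      fin_cases p <;> fin_cases q <;> fin_cases r <;> fin_cases s <;>
        first
          | exact absurd hset (by decide)
          | ((try simp only [Fin.reduceFinMk] at *); omega)
    rcases H with h | h | h
    exacts [⟨0, by norm_num, (PE_zero u).2 h.1, (PE_zero v).2 h.2⟩,
      ⟨1, by norm_num, (PE_one u).2 h.1, (PE_one v).2 h.2⟩,
      ⟨2, by norm_num, (PE_two u).2 h.1, (PE_two v).2 h.2⟩]
  · rintro ⟨t, ht, hu, hv⟩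
    interval_cases t
    · rw [PE_zero] at hu hv
      exact ⟨0, 1, 2, 3, by decide, hu.1, hv.1, hu.2, hv.2⟩
    · rw [PE_one] at hu hv
      exact ⟨0, 2, 1, 3, by decide, hu.1, hv.1, hu.2, hv.2⟩
    · rw [PE_two] at hu hv
      exact ⟨0, 3, 1, 2, by decide, hu.1, hv.1, hu.2, hv.2⟩

lemma colSplit_iff (v : Fin 4 → ℕ) :
    ColSplit v ↔ ∃ t, t < 3 ∧ SP t v := by
  constructor
  · rintro ⟨p, q, r, s, hset, h1, h2, h3⟩
    have H : (v 0 = v 1 ∧ v 2 = v 3 ∧ v 0 ≠ v 2) ∨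
        (v 0 = v 2 ∧ v 1 = v 3 ∧ v 0 ≠ v 1) ∨
        (v 0 = v 3 ∧ v 1 = v 2 ∧ v 0 ≠ v 1) := by
      fin_cases p <;> fin_cases q <;> fin_cases r <;> fin_cases s <;>
        first
          | exact absurd hset (by decide)
          | ((try simp only [Fin.reduceFinMk] at *); omega)
    rcases H with h | h | h
    exacts [⟨0, by norm_num, (PE_zero v).2 ⟨h.1, h.2.1⟩, by simpa [oth] using h.2.2⟩,
      ⟨1, by norm_num, (PE_one v).2 ⟨h.1, h.2.1⟩, by simpa [oth] using h.2.2⟩,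
      ⟨2, by norm_num, (PE_two v).2 ⟨h.1, h.2.1⟩, by simpa [oth] using h.2.2⟩]
  · rintro ⟨t, ht, hpe, hne⟩
    interval_cases t
    · rw [PE_zero] at hpe
      exact ⟨0, 1, 2, 3, by decide, hpe.1, hpe.2, by simpa [oth] using hne⟩
    · rw [PE_one] at hpe
      exact ⟨0, 2, 1, 3, by decide, hpe.1, hpe.2, by simpa [oth] using hne⟩
    · rw [PE_two] at hpe
      exact ⟨0, 3, 1, 2, by decide, hpe.1, hpe.2, by simpa [oth] using hne⟩

lemma not_colAll_of_SP {t : ℕ} {v : Fin 4 → ℕ} (ht : t < 3) (h : SP t v) (h2 : ColAll v) : False := by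
  obtain ⟨hpe, hne⟩ := h
  interval_cases t <;>
    simp only [PE_zero, PE_one, PE_two] at hpe <;> simp [oth] at hne <;>
    obtain ⟨a1, a2, a3⟩ := h2 <;> omega

lemma SP_unique {t t' : ℕ} {v : Fin 4 → ℕ} (ht : t < 3) (ht' : t' < 3)
    (h : SP t v) (h' : SP t' v) : t = t' := by
  obtain ⟨hpe, hne⟩ := h; obtain ⟨hpe', hne'⟩ := h'
  interval_cases t <;> interval_cases t' <;>
    simp only [PE_zero, PE_one, PE_two] at hpe hpe' <;> simp [oth] at hne hne' <;> omega

lemma PE_eq_of_SP {t t' : ℕ} {v : Fin 4 → ℕ} (ht : t < 3) (ht' : t' < 3)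
    (h : SP t v) (h' : PE t' v) : t' = t := by
  obtain ⟨hpe, hne⟩ := h
  interval_cases t <;> interval_cases t' <;>
    simp only [PE_zero, PE_one, PE_two] at hpe h' <;> simp [oth] at hne <;> omega

lemma PE_of_colAll {v : Fin 4 → ℕ} (h : ColAll v) (t : ℕ) (ht : t < 3) : PE t v := by
  obtain ⟨a1, a2, a3⟩ := h
  interval_cases t <;> simp only [PE_zero, PE_one, PE_two] <;> omega

lemma pat_apply_zero (t a b : ℕ) : pat t a b 0 = a := by simp [pat]

lemma pat_apply_oth {t : ℕ} (ht : t < 3) (a b : ℕ) : pat t a b (oth t) = b := by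
  interval_cases t <;> simp [pat, oth]

lemma PE_pat {t : ℕ} (ht : t < 3) (a b : ℕ) : PE t (pat t a b) := by
  interval_cases t <;> simp [pat, PE]

lemma SP_pat {t : ℕ} (ht : t < 3) {a b : ℕ} (hab : a ≠ b) : SP t (pat t a b) := by
  refine ⟨PE_pat ht a b, ?_⟩
  rw [pat_apply_zero, pat_apply_oth ht]
  exact hab

lemma pat_eq_of_SP {t : ℕ} {v : Fin 4 → ℕ} (ht : t < 3) (h : SP t v) :
    pat t (v 0) (v (oth t)) = v := by
  obtain ⟨hpe, _⟩ := h
  funext k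
  interval_cases t <;> simp only [PE_zero, PE_one, PE_two] at hpe <;>
    fin_cases k <;> simp [pat, oth] <;> omega

lemma pat_mem {d t a b : ℕ} (ha : a ∈ Finset.Icc 1 d) (hb : b ∈ Finset.Icc 1 d) (k : Fin 4) :
    pat t a b k ∈ Finset.Icc 1 d := by
  unfold pat
  split_ifs <;> first | exact ha | exact hb

lemma stepOK_of_PE {t : ℕ} {u v : Fin 4 → ℕ} (ht : t < 3) (hu : PE t u) (hv : PE t v) :
    StepOK u v := (stepOK_iff u v).2 ⟨t, ht, hu, hv⟩

lemma PE_const (t b : ℕ) : PE t (fun _ => b) := by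
  unfold PE; split_ifs <;> exact ⟨rfl, rfl⟩

noncomputable def partOf (v : Fin 4 → ℕ) : ℕ :=
  open Classical in if SP 0 v then 0 else if SP 1 v then 1 else 2

lemma partOf_lt (v : Fin 4 → ℕ) : partOf v < 3 := by
  unfold partOf; split_ifs <;> norm_num

lemma partOf_eq {t : ℕ} {v : Fin 4 → ℕ} (ht : t < 3) (h : SP t v) : partOf v = t := by
  unfold partOf
  split_ifs with h0 h1
  · exact (SP_unique (by norm_num) ht h0 h).symm ▸ rfl
  · exact (SP_unique (by norm_num) ht h1 h)
  · interval_cases t <;> first | exact absurd h h0 | exact absurd h h1 | rfl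

lemma SP_partOf {v : Fin 4 → ℕ} (h : ColSplit v) : SP (partOf v) v := by
  obtain ⟨t, ht, hsp⟩ := (colSplit_iff v).1 h
  rw [partOf_eq ht hsp]; exact hsp

def lastcol {n : ℕ} (j : Fin 4 → Fin (n + 1) → ℕ) : Fin 4 → ℕ := fun k => j k (Fin.last n)

def resT {n : ℕ} (j : Fin 4 → Fin (n + 2) → ℕ) : Fin 4 → Fin (n + 1) → ℕ :=
  fun k i => j k i.castSucc

def extT {n : ℕ} (j : Fin 4 → Fin (n + 1) → ℕ) (v : Fin 4 → ℕ) : Fin 4 → Fin (n + 2) → ℕ :=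
  fun k => Fin.lastCases (v k) (j k)

lemma extT_castSucc {n : ℕ} (j : Fin 4 → Fin (n + 1) → ℕ) (v : Fin 4 → ℕ) (k : Fin 4)
    (i : Fin (n + 1)) : extT j v k i.castSucc = j k i := by
  simp [extT]

lemma extT_last {n : ℕ} (j : Fin 4 → Fin (n + 1) → ℕ) (v : Fin 4 → ℕ) (k : Fin 4) :
    extT j v k (Fin.last (n + 1)) = v k := by
  simp [extT]

lemma resT_extT {n : ℕ} (j : Fin 4 → Fin (n + 1) → ℕ) (v : Fin 4 → ℕ) :
    resT (extT j v) = j := by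
  funext k i; exact extT_castSucc j v k i

lemma lastcol_extT {n : ℕ} (j : Fin 4 → Fin (n + 1) → ℕ) (v : Fin 4 → ℕ) :
    lastcol (extT j v) = v := by
  funext k; exact extT_last j v k

lemma extT_resT {n : ℕ} (j : Fin 4 → Fin (n + 2) → ℕ) :
    extT (resT j) (lastcol j) = j := by
  funext k i
  cases i using Fin.lastCases with
  | last => exact extT_last _ _ _
  | cast i => exact extT_castSucc _ _ _ _

lemma extT_zero {n : ℕ} (j : Fin 4 → Fin (n + 1) → ℕ) (v : Fin 4 → ℕ) (k : Fin 4) :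
    extT j v k 0 = j k 0 := by
  have : (0 : Fin (n + 2)) = Fin.castSucc 0 := by simp
  rw [this, extT_castSucc]

lemma endAll_iff {n : ℕ} (j : Fin 4 → Fin (n + 1) → ℕ) : EndAll n j ↔ ColAll (lastcol j) :=
  Iff.rfl

lemma endSplit_iff {n : ℕ} (j : Fin 4 → Fin (n + 1) → ℕ) :
    EndSplit n j ↔ ColSplit (lastcol j) := Iff.rfl

lemma bad_resT {d n : ℕ} {j : Fin 4 → Fin (n + 2) → ℕ} (h : BadTuple d (n + 1) j) :
    BadTuple d n (resT j) := by
  refine ⟨fun k i => h.1 k i.castSucc, fun i => ?_⟩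
  have := h.2 i.castSucc
  have e : i.castSucc.succ = (i.succ).castSucc := (Fin.succ_castSucc i).symm ▸ rfl
  rw [e] at this; exact this

lemma bad_last_step {d n : ℕ} {j : Fin 4 → Fin (n + 2) → ℕ} (h : BadTuple d (n + 1) j) :
    StepOK (lastcol (resT j)) (lastcol j) := by
  have := h.2 (Fin.last n)
  rw [Fin.succ_last] at this; exact this

lemma bad_extT {d n : ℕ} {j : Fin 4 → Fin (n + 1) → ℕ} {v : Fin 4 → ℕ}
    (hj : BadTuple d n j) (hv : ∀ k, v k ∈ Finset.Icc 1 d)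
    (hs : StepOK (lastcol j) v) : BadTuple d (n + 1) (extT j v) := by
  constructor
  · intro k i
    cases i using Fin.lastCases with
    | last => rw [extT_last]; exact hv k
    | cast i => rw [extT_castSucc]; exact hj.1 k i
  · intro i
    cases i using Fin.lastCases with
    | last =>
      simp only [Fin.succ_last, extT_last, extT_castSucc]
      exact hs
    | cast i =>
      have := hj.2 i
      simp only [Fin.succ_castSucc, extT_castSucc]
      exact this

lemma xorAux {d n : ℕ} {j : Fin 4 → Fin (n + 1) → ℕ} (hb : BadTuple d n j)
    (h0 : ∀ k, j k 0 = 1) : Xor' (EndAll n j) (EndSplit n j) := by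
  have hnotboth : EndAll n j → ¬EndSplit n j := by
    intro hall hsp
    obtain ⟨t, ht, hspt⟩ := (colSplit_iff _).1 ((endSplit_iff j).1 hsp)
    exact not_colAll_of_SP ht hspt ((endAll_iff j).1 hall)
  have hone : EndAll n j ∨ EndSplit n j := by
    cases n with
    | zero =>
      left
      have hl : ∀ k, j k (Fin.last 0) = 1 := fun k => by
        rw [Fin.fin_one_eq_zero (Fin.last 0)]; exact h0 k
      exact ⟨(hl 0).trans (hl 1).symm, (hl 1).trans (hl 2).symm, (hl 2).trans (hl 3).symm⟩
    | succ m =>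
      have hstep := hb.2 (Fin.last m)
      rw [Fin.succ_last] at hstep
      obtain ⟨t, ht, hu, hv⟩ := (stepOK_iff _ _).1 hstep
      by_cases hc : lastcol j 0 = lastcol j (oth t)
      · left
        rw [endAll_iff]
        have hv' : PE t (lastcol j) := hv
        unfold ColAll
        interval_cases t <;> simp only [PE_zero, PE_one, PE_two] at hv' <;>
          simp [oth] at hc <;>
          omega
      · right
        rw [endSplit_iff, colSplit_iff]
        exact ⟨t, ht, hv, hc⟩
  rcases hone with h | h
  · exact Or.inl ⟨h, hnotboth h⟩
  · exact Or.inr ⟨h, fun hall => hnotboth hall h⟩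

def SA (d ℓ : ℕ) :=
  {j : Fin 4 → Fin (ℓ + 1) → ℕ // BadTuple d ℓ j ∧ (∀ k, j k 0 = 1) ∧ EndAll ℓ j}

def SB (d ℓ : ℕ) :=
  {j : Fin 4 → Fin (ℓ + 1) → ℕ // BadTuple d ℓ j ∧ (∀ k, j k 0 = 1) ∧ EndSplit ℓ j}

lemma Acount_eq (d ℓ : ℕ) : Acount d ℓ = Nat.card (SA d ℓ) := rfl

lemma Bcount_eq (d ℓ : ℕ) : Bcount d ℓ = Nat.card (SB d ℓ) := rfl

lemma finite_pred {d ℓ : ℕ} {P : (Fin 4 → Fin (ℓ + 1) → ℕ) → Prop}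
    (hP : ∀ j, P j → ∀ k i, j k i ≤ d) : Finite {j // P j} := by
  have hlt : ∀ (x : {j // P j}) k i, x.1 k i < d + 1 := fun x k i =>
    Nat.lt_succ_of_le (hP x.1 x.2 k i)
  apply Finite.of_injective
    (fun x : {j // P j} => (fun k i => (⟨x.1 k i, hlt x k i⟩ : Fin (d + 1)) :
      Fin 4 → Fin (ℓ + 1) → Fin (d + 1)))
  intro x y h
  apply Subtype.ext; funext k i
  exact congrArg Fin.val (congrFun (congrFun h k) i)

instance (d ℓ : ℕ) : Finite (SA d ℓ) :=
  finite_pred fun j hj k i => (Finset.mem_Icc.1 (hj.1.1 k i)).2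

instance (d ℓ : ℕ) : Finite (SB d ℓ) :=
  finite_pred fun j hj k i => (Finset.mem_Icc.1 (hj.1.1 k i)).2

lemma Acount_zero {d : ℕ} (hd : 1 ≤ d) : Acount d 0 = 1 := by
  rw [Acount_eq]
  haveI : Unique (SA d 0) := by
    refine ⟨⟨⟨fun _ _ => 1, ⟨fun k i => Finset.mem_Icc.2 ⟨le_refl 1, hd⟩, fun i => i.elim0⟩,
      fun k => rfl, rfl, rfl, rfl⟩⟩, ?_⟩
    rintro ⟨j, hb, h0, _⟩
    apply Subtype.ext; funext k i
    rw [Fin.fin_one_eq_zero i]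
    exact h0 k
  exact Nat.card_unique

lemma Bcount_zero (d : ℕ) : Bcount d 0 = 0 := by
  rw [Bcount_eq]
  haveI : IsEmpty (SB d 0) := by
    refine ⟨fun x => ?_⟩
    obtain ⟨t, ht, hpe, hne⟩ := (colSplit_iff _).1 ((endSplit_iff x.1).1 x.2.2.2)
    have h1 : ∀ k, lastcol x.1 k = 1 := fun k => by
      unfold lastcol; rw [Fin.fin_one_eq_zero (Fin.last 0)]; exact x.2.2.1 k
    exact hne ((h1 0).trans (h1 (oth t)).symm)
  exact Nat.card_of_isEmpty

def D1 (d : ℕ) := {p : ℕ × ℕ // p.1 ∈ Finset.Icc 1 d ∧ p.2 ∈ Finset.Icc 1 d ∧ p.1 ≠ p.2}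

noncomputable def D1equiv (d : ℕ) :
    D1 d ≃ {p : ℕ × ℕ // p ∈ (Finset.Icc 1 d ×ˢ Finset.Icc 1 d).filter fun p => p.1 ≠ p.2} :=
  Equiv.subtypeEquivRight fun p => by
    simp [Finset.mem_filter, Finset.mem_product, and_assoc]

instance (d : ℕ) : Finite (D1 d) := Finite.of_equiv _ (D1equiv d).symm

lemma D1_card (d : ℕ) : Nat.card (D1 d) = d ^ 2 - d := by
  rw [Nat.card_congr (D1equiv d), Nat.card_eq_finsetCard]
  have h1 : (Finset.Icc 1 d ×ˢ Finset.Icc 1 d).filter (fun p => p.1 = p.2) =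
      (Finset.Icc 1 d).image (fun a => (a, a)) := by
    ext ⟨a, b⟩
    simp only [Finset.mem_filter, Finset.mem_product, Finset.mem_image]
    constructor
    · rintro ⟨⟨ha, hb⟩, he⟩; exact ⟨a, ha, by simp [he]⟩
    · rintro ⟨c, hc, he⟩
      obtain ⟨rfl, rfl⟩ := Prod.mk.injEq .. ▸ he
      exact ⟨⟨hc, hc⟩, rfl⟩
  have h2 := Finset.card_filter_add_card_filter_not
    (s := Finset.Icc 1 d ×ˢ Finset.Icc 1 d) (p := fun p => p.1 = p.2)
  have h3 : ((Finset.Icc 1 d ×ˢ Finset.Icc 1 d).filter (fun p => p.1 = p.2)).card = d := by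
    rw [h1, Finset.card_image_of_injective _ (fun a b h => (Prod.mk.injEq .. ▸ h).1),
      Nat.card_Icc]
    omega
  have h4 : (Finset.Icc 1 d ×ˢ Finset.Icc 1 d).card = d * d := by
    rw [Finset.card_product, Nat.card_Icc]
    simp
  have hpow : d ^ 2 = d * d := sq d
  simp only [ne_eq]
  omega

lemma resT_zero {n : ℕ} (j : Fin 4 → Fin (n + 2) → ℕ) (k : Fin 4) :
    resT j k 0 = j k 0 := by
  show j k (Fin.castSucc 0) = j k 0
  rw [Fin.castSucc_zero]

lemma lastcol_const {n : ℕ} {j : Fin 4 → Fin (n + 1) → ℕ} (h : EndAll n j) :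
    lastcol j = fun _ => j 0 (Fin.last n) := by
  obtain ⟨h1, h2, h3⟩ := h
  funext k
  fin_cases k <;> simp only [lastcol] <;> (try simp only [Fin.reduceFinMk]) <;> omega

lemma pe_exists_of_SAB {d n : ℕ} {j : Fin 4 → Fin (n + 1) → ℕ}
    (h : EndAll n j ∨ EndSplit n j) : ∃ t, t < 3 ∧ PE t (lastcol j) := by
  rcases h with h | h
  · exact ⟨0, by norm_num, PE_of_colAll ((endAll_iff j).1 h) 0 (by norm_num)⟩
  · obtain ⟨t, ht, hsp⟩ := (colSplit_iff _).1 ((endSplit_iff j).1 h)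
    exact ⟨t, ht, hsp.1⟩

lemma notboth {d n : ℕ} {j : Fin 4 → Fin (n + 1) → ℕ} (hb : BadTuple d n j)
    (h0 : ∀ k, j k 0 = 1) (hA : EndAll n j) (hB : EndSplit n j) : False := by
  rcases xorAux hb h0 with ⟨_, h⟩ | ⟨_, h⟩
  exacts [h hB, h hA]

lemma recA (d ℓ : ℕ) : Acount d (ℓ + 1) = d * Acount d ℓ + d * Bcount d ℓ := by
  classical
  have key : Nat.card ((SA d ℓ ⊕ SB d ℓ) × {b : ℕ // b ∈ Finset.Icc 1 d}) =
      Acount d (ℓ + 1) := by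
    rw [Acount_eq]
    apply Nat.card_eq_of_bijective
      (f := fun x => (⟨extT (Sum.elim Subtype.val Subtype.val x.1) (fun _ => x.2.1), by
        obtain ⟨x1, b, hbmem⟩ := x
        have hj : BadTuple d ℓ (Sum.elim Subtype.val Subtype.val x1) ∧
            (∀ k, (Sum.elim Subtype.val Subtype.val x1) k 0 = 1) ∧
            (EndAll ℓ (Sum.elim Subtype.val Subtype.val x1) ∨
              EndSplit ℓ (Sum.elim Subtype.val Subtype.val x1)) := by
          rcases x1 with a | bb
          exacts [⟨a.2.1, a.2.2.1, Or.inl a.2.2.2⟩, ⟨bb.2.1, bb.2.2.1, Or.inr bb.2.2.2⟩]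
        obtain ⟨t, ht, hpe⟩ := pe_exists_of_SAB (d := d) hj.2.2
        refine ⟨bad_extT hj.1 (fun _ => hbmem) (stepOK_of_PE ht hpe (PE_const t b)), ?_, ?_⟩
        · intro k; rw [extT_zero]; exact hj.2.1 k
        · rw [endAll_iff, lastcol_extT]
          exact ⟨rfl, rfl, rfl⟩⟩ : SA d (ℓ + 1)))
    constructor
    · rintro ⟨x1, b, hbmem⟩ ⟨y1, c, hcmem⟩ h
      have hval := congrArg Subtype.val h
      simp only at hval
      have hcol := congrArg lastcol hval
      rw [lastcol_extT, lastcol_extT] at hcol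
      have hbc : b = c := congrFun hcol 0
      have hbase := congrArg resT hval
      rw [resT_extT, resT_extT] at hbase
      have hx : x1 = y1 := by
        rcases x1 with a | bb <;> rcases y1 with a' | bb' <;> simp only [Sum.elim_inl,
          Sum.elim_inr, Sum.elim] at hbase
        · exact congrArg Sum.inl (Subtype.ext hbase)
        · exact absurd (hbase ▸ a.2.2.2) fun h => notboth bb'.2.1 bb'.2.2.1 h bb'.2.2.2
        · exact absurd (hbase.symm ▸ a'.2.2.2) fun h => notboth bb.2.1 bb.2.2.1 h bb.2.2.2
        · exact congrArg Sum.inr (Subtype.ext hbase)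
      exact Prod.ext hx (Subtype.ext hbc)
    · rintro ⟨j, hb, h0, hall⟩
      set j' := resT j with hj'
      have hb' : BadTuple d ℓ j' := bad_resT hb
      have h0' : ∀ k, j' k 0 = 1 := fun k => by rw [hj', resT_zero]; exact h0 k
      have hbmem : j 0 (Fin.last (ℓ + 1)) ∈ Finset.Icc 1 d := hb.1 0 (Fin.last (ℓ + 1))
      have hcol : lastcol j = fun _ => j 0 (Fin.last (ℓ + 1)) := lastcol_const hall
      have hext : ∀ z : SA d ℓ ⊕ SB d ℓ, Sum.elim Subtype.val Subtype.val z = j' →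
          extT (Sum.elim (Subtype.val) (Subtype.val) z) (fun _ => j 0 (Fin.last (ℓ + 1))) = j := by
        intro z hz
        rw [hz, ← hcol, hj', extT_resT]
      rcases xorAux hb' h0' with ⟨hA, _⟩ | ⟨hB, _⟩
      · exact ⟨(Sum.inl ⟨j', hb', h0', hA⟩, ⟨j 0 (Fin.last (ℓ + 1)), hbmem⟩),
          Subtype.ext (hext _ rfl)⟩
      · exact ⟨(Sum.inr ⟨j', hb', h0', hB⟩, ⟨j 0 (Fin.last (ℓ + 1)), hbmem⟩),
          Subtype.ext (hext _ rfl)⟩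
  rw [← key, Nat.card_prod, Nat.card_sum, Nat.card_eq_finsetCard, Nat.card_Icc,
    ← Acount_eq, ← Bcount_eq, Nat.add_sub_cancel]
  ring

def T3equiv : {t : ℕ // t < 3} ≃ Fin 3 :=
  ⟨fun x => ⟨x.1, x.2⟩, fun x => ⟨x.1, x.2⟩, fun _ => rfl, fun _ => rfl⟩

instance : Finite {t : ℕ // t < 3} := Finite.of_equiv _ T3equiv.symm

lemma T3_card : Nat.card {t : ℕ // t < 3} = 3 := by
  rw [Nat.card_congr T3equiv]; simp

lemma mem_SB_ext {d ℓ t a b : ℕ} {j : Fin 4 → Fin (ℓ + 1) → ℕ} (ht : t < 3)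
    (hb : BadTuple d ℓ j) (h0 : ∀ k, j k 0 = 1) (hpe : PE t (lastcol j))
    (ha : a ∈ Finset.Icc 1 d) (hbm : b ∈ Finset.Icc 1 d) (hab : a ≠ b) :
    BadTuple d (ℓ + 1) (extT j (pat t a b)) ∧ (∀ k, extT j (pat t a b) k 0 = 1) ∧
      EndSplit (ℓ + 1) (extT j (pat t a b)) :=
  ⟨bad_extT hb (pat_mem ha hbm) (stepOK_of_PE ht hpe (PE_pat ht a b)),
   fun k => by rw [extT_zero]; exact h0 k,
   by rw [endSplit_iff, lastcol_extT, colSplit_iff]; exact ⟨t, ht, SP_pat ht hab⟩⟩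

lemma recB (d ℓ : ℕ) :
    Bcount d (ℓ + 1) = 3 * (d ^ 2 - d) * Acount d ℓ + (d ^ 2 - d) * Bcount d ℓ := by
  classical
  have key : Nat.card ((SA d ℓ × ({t : ℕ // t < 3} × D1 d)) ⊕ (SB d ℓ × D1 d)) =
      Bcount d (ℓ + 1) := by
    rw [Bcount_eq]
    apply Nat.card_eq_of_bijective (f := fun x =>
      match x with
      | .inl (aa, tt, pp) =>
          (⟨extT aa.1 (pat tt.1 pp.1.1 pp.1.2),
            mem_SB_ext tt.2 aa.2.1 aa.2.2.1
              (PE_of_colAll ((endAll_iff _).1 aa.2.2.2) tt.1 tt.2)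
              pp.2.1 pp.2.2.1 pp.2.2.2⟩ : SB d (ℓ + 1))
      | .inr (bb, pp) =>
          (⟨extT bb.1 (pat (partOf (lastcol bb.1)) pp.1.1 pp.1.2),
            mem_SB_ext (partOf_lt _) bb.2.1 bb.2.2.1
              (SP_partOf ((endSplit_iff _).1 bb.2.2.2)).1
              pp.2.1 pp.2.2.1 pp.2.2.2⟩ : SB d (ℓ + 1)))
    constructor
    · rintro (⟨⟨ja, hja⟩, ⟨t, ht3⟩, ⟨⟨a, b⟩, hab⟩⟩ | ⟨⟨jb, hjb⟩, ⟨⟨a, b⟩, hab⟩⟩) <;>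
        rintro (⟨⟨ja', hja'⟩, ⟨t', ht3'⟩, ⟨⟨a', b'⟩, hab'⟩⟩ | ⟨⟨jb', hjb'⟩, ⟨⟨a', b'⟩, hab'⟩⟩) <;>
        intro h <;>
        have hval := congrArg Subtype.val h <;>
        simp only at hval <;>
        have hcol := congrArg lastcol hval <;>
        rw [lastcol_extT, lastcol_extT] at hcol <;>
        have hbase := congrArg resT hval <;>
        rw [resT_extT, resT_extT] at hbase
      · -- inl inl
        have hte : t = t' :=
          SP_unique ht3 ht3' (SP_pat ht3 hab.2.2)
            (by rw [hcol]; exact SP_pat ht3' hab'.2.2)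
        subst hte; subst hbase
        have hae : a = a' := by
          have := congrFun hcol 0; rwa [pat_apply_zero, pat_apply_zero] at this
        have hbe : b = b' := by
          have := congrFun hcol (oth t)
          rwa [pat_apply_oth ht3, pat_apply_oth ht3] at this
        subst hae; subst hbe; rfl
      · -- inl inr
        exact absurd (hbase ▸ hja.2.2) fun hEA => notboth hjb'.1 hjb'.2.1 hEA hjb'.2.2
      · -- inr inl
        exact absurd (hbase.symm ▸ hja'.2.2) fun hEA => notboth hjb.1 hjb.2.1 hEA hjb.2.2
      · -- inr inr
        subst hbase
        have hae : a = a' := by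
          have := congrFun hcol 0; rwa [pat_apply_zero, pat_apply_zero] at this
        have hbe : b = b' := by
          have := congrFun hcol (oth (partOf (lastcol jb)))
          rwa [pat_apply_oth (partOf_lt _), pat_apply_oth (partOf_lt _)] at this
        subst hae; subst hbe; rfl
    · rintro ⟨j, hb, h0, hsplit⟩
      have hcs : ColSplit (lastcol j) := (endSplit_iff j).1 hsplit
      have hsp : SP (partOf (lastcol j)) (lastcol j) := SP_partOf hcs
      set s := partOf (lastcol j) with hs
      have hs3 : s < 3 := partOf_lt _
      have hpat : pat s (lastcol j 0) (lastcol j (oth s)) = lastcol j := pat_eq_of_SP hs3 hsp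
      have ha : lastcol j 0 ∈ Finset.Icc 1 d := hb.1 0 (Fin.last (ℓ + 1))
      have hbmem : lastcol j (oth s) ∈ Finset.Icc 1 d := hb.1 (oth s) (Fin.last (ℓ + 1))
      have hb' : BadTuple d ℓ (resT j) := bad_resT hb
      have h0' : ∀ k, resT j k 0 = 1 := fun k => by rw [resT_zero]; exact h0 k
      rcases xorAux hb' h0' with ⟨hA, _⟩ | ⟨hB, _⟩
      · refine ⟨.inl (⟨resT j, hb', h0', hA⟩, ⟨s, hs3⟩,
          ⟨(lastcol j 0, lastcol j (oth s)), ha, hbmem, hsp.2⟩), Subtype.ext ?_⟩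
        show extT (resT j) (pat s (lastcol j 0) (lastcol j (oth s))) = j
        rw [hpat, extT_resT]
      · have hpu : SP (partOf (lastcol (resT j))) (lastcol (resT j)) :=
          SP_partOf ((endSplit_iff _).1 hB)
        obtain ⟨t', ht', hu', hv'⟩ := (stepOK_iff _ _).1 (bad_last_step hb)
        have e1 : t' = partOf (lastcol (resT j)) := PE_eq_of_SP (partOf_lt _) ht' hpu hu'
        have e2 : t' = s := PE_eq_of_SP hs3 ht' hsp hv'
        refine ⟨.inr (⟨resT j, hb', h0', hB⟩,
          ⟨(lastcol j 0, lastcol j (oth s)), ha, hbmem, hsp.2⟩), Subtype.ext ?_⟩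
        show extT (resT j) (pat (partOf (lastcol (resT j))) (lastcol j 0) (lastcol j (oth s))) = j
        rw [← e1, e2, hpat, extT_resT]
  rw [← key, Nat.card_sum, Nat.card_prod, Nat.card_prod, Nat.card_prod, T3_card, D1_card,
    ← Acount_eq, ← Bcount_eq]
  ring

theorem bad_tuple_recursion (d : ℕ) (hd : 1 ≤ d) :
    (∀ ℓ : ℕ, 1 ≤ ℓ → ∀ j : Fin 4 → Fin (ℓ + 1) → ℕ,
      BadTuple d ℓ j → (∀ k, j k 0 = 1) → Xor' (EndAll ℓ j) (EndSplit ℓ j)) ∧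
    Acount d 1 = d ∧
    Bcount d 1 = 3 * (d ^ 2 - d) ∧
    (∀ ℓ : ℕ, 1 ≤ ℓ → Acount d (ℓ + 1) = d * Acount d ℓ + d * Bcount d ℓ) ∧
    (∀ ℓ : ℕ, 1 ≤ ℓ →
      Bcount d (ℓ + 1) = 3 * (d ^ 2 - d) * Acount d ℓ + (d ^ 2 - d) * Bcount d ℓ) := by
  refine ⟨fun ℓ _ j hb h0 => xorAux hb h0, ?_, ?_, fun ℓ _ => recA d ℓ, fun ℓ _ => recB d ℓ⟩
  · have h := recA d 0
    rw [Acount_zero hd, Bcount_zero] at h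
    simpa using h
  · have h := recB d 0
    rw [Acount_zero hd, Bcount_zero] at h
    simpa using h
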